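/- Let K be an infinite field and let q = x₁x₂ + x₃x₄ + x₅x₆ + ⋯ be the infinite quadric in S²_∞. For every infinite quadric p = Σ_{i≤j} a_{ij} xᵢxⱼ ∈ S²_∞, there exists an element e of the substitution monoid E (rows with finitely many nonzero entries) such that S²(e)q = p. In particular, all infinite-rank quadrics form a single equivalence class under mutual specialisation. -/

import Mathlib

open MvPolynomial

/-- The inverse limit `S^d_∞ = lim← S^d(Kⁿ)`: compatible sequences of homogeneous degree-`d`
polynomials, where the map `S^d(K^{n+1}) → S^d(Kⁿ)` sets the last variable to `0`. -/
def PSeq (K : Type*) [CommSemiring K] (d : ℕ) : Type _ :=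
  {p : ∀ n : ℕ, MvPolynomial (Fin n) K //
    (∀ n, (p n).IsHomogeneous d) ∧
    ∀ n, aeval (fun i : Fin (n + 1) =>
        if h : i.1 < n then (X ⟨i.1, h⟩ : MvPolynomial (Fin n) K) else 0) (p (n + 1)) = p n}

/-- A matrix `e : ℕ × ℕ → K` is row-finite when each row has finitely many nonzero entries;
these matrices form the monoid `E` acting by substitutions `x_j ↦ Σ_i e i j • x_i`. -/
def RowFinite {K : Type*} [Zero K] (e : ℕ → ℕ → K) : Prop :=
  ∀ i, (Function.support (e i)).Finite

/-- `SpecTo q p` means that `q` specialises to `p`, i.e. `p = P(e) q` for some element `e` of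
the monoid `E` of row-finite substitution matrices: at each finite level `n`, `p` is obtained
from a sufficiently deep truncation of `q` by the substitution given by the corresponding
upper-left block of `e` (all the remaining entries of the first `n` rows vanishing). -/
def SpecTo {K : Type*} [CommSemiring K] {d : ℕ} (q p : PSeq K d) : Prop :=
  ∃ e : ℕ → ℕ → K, RowFinite e ∧
    ∀ n : ℕ, ∃ N : ℕ,
      (∀ i j : ℕ, i < n → N ≤ j → e i j = 0) ∧
      aeval (fun j : Fin N => ∑ i : Fin n, e i.1 j.1 • (X i : MvPolynomial (Fin n) K))
        (q.1 N) = p.1 n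


lemma toMultiset_pair {σ : Type*} [DecidableEq σ] (a b : σ) :
    Finsupp.toMultiset (Finsupp.single a 1 + Finsupp.single b 1) = {a, b} := by
  rw [Finsupp.toMultiset_add, Finsupp.toMultiset_single, Finsupp.toMultiset_single]
  simp [Multiset.singleton_add]

lemma exists_pair_of_sum_eq_two {σ : Type*} [DecidableEq σ] (d : σ →₀ ℕ)
    (h : d.degree = 2) :
    ∃ a b : σ, d = Finsupp.single a 1 + Finsupp.single b 1 := by
  have hc : Multiset.card d.toMultiset = 2 := by
    rw [Finsupp.card_toMultiset]; exact h
  obtain ⟨a, b, hab⟩ := Multiset.card_eq_two.1 hc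
  refine ⟨a, b, ?_⟩
  have h2 : Finsupp.toMultiset d = Finsupp.toMultiset (Finsupp.single a 1 + Finsupp.single b 1) := by
    rw [toMultiset_pair, hab]
  have := congrArg Multiset.toFinsupp h2
  rwa [Finsupp.toMultiset_toFinsupp, Finsupp.toMultiset_toFinsupp] at this

lemma pair_finsupp_eq' {σ : Type*} [DecidableEq σ] {a b c d : σ}
    (h : Finsupp.single a 1 + Finsupp.single b 1 = Finsupp.single c 1 + Finsupp.single d 1) :
    (a = c ∧ b = d) ∨ (a = d ∧ b = c) := by
  have hm : ({a, b} : Multiset σ) = {c, d} := by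
    rw [← toMultiset_pair a b, ← toMultiset_pair c d, h]
  rw [Multiset.insert_eq_cons, Multiset.insert_eq_cons, Multiset.cons_eq_cons] at hm
  rcases hm with ⟨h1, h2⟩ | ⟨-, cs, h1, h2⟩
  · exact Or.inl ⟨h1, Multiset.singleton_inj.1 h2⟩
  · have hcs : cs = 0 := by
      have := congrArg Multiset.card h1
      simpa using this
    subst hcs
    simp only [Multiset.cons_zero] at h1 h2
    exact Or.inr ⟨(Multiset.singleton_inj.1 h2).symm, Multiset.singleton_inj.1 h1⟩

lemma degree_pair {σ : Type*} [DecidableEq σ] (a b : σ) :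
    (Finsupp.single a 1 + Finsupp.single b 1 : σ →₀ ℕ).degree = 2 := by
  have : Multiset.card (Finsupp.toMultiset (Finsupp.single a 1 + Finsupp.single b 1)) = 2 := by
    rw [toMultiset_pair]; rfl
  rwa [Finsupp.card_toMultiset] at this

lemma quad_decomp {K : Type*} [CommSemiring K] {n : ℕ} (P : MvPolynomial (Fin n) K)
    (hP : P.IsHomogeneous 2) :
    P = ∑ m : Fin n, ∑ i : Fin n,
      (if m ≤ i then coeff (Finsupp.single m 1 + Finsupp.single i 1) P else 0) •
        (X m * X i) := by
  apply MvPolynomial.ext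
  intro d
  have hXX : ∀ m i : Fin n, (X m * X i : MvPolynomial (Fin n) K)
      = monomial (Finsupp.single m 1 + Finsupp.single i 1) 1 := by
    intro m i
    rw [X, X, monomial_mul, mul_one]
  have hterm : ∀ m i : Fin n, coeff d
      ((if m ≤ i then coeff (Finsupp.single m 1 + Finsupp.single i 1) P else 0) •
        (X m * X i))
      = (if m ≤ i then coeff (Finsupp.single m 1 + Finsupp.single i 1) P else 0) *
        (if Finsupp.single m 1 + Finsupp.single i 1 = d then 1 else 0) := by
    intro m i
    rw [coeff_smul, hXX, coeff_monomial, smul_eq_mul]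
  simp only [coeff_sum, hterm]
  rw [← Finset.sum_product']
  by_cases h2 : d.degree = 2
  · obtain ⟨a, b, rfl⟩ := exists_pair_of_sum_eq_two d h2
    set m₀ := min a b
    set i₀ := max a b
    have hd : Finsupp.single a 1 + Finsupp.single b 1
        = Finsupp.single m₀ 1 + Finsupp.single i₀ 1 := by
      rcases le_total a b with hab | hab
      · rw [show m₀ = a from min_eq_left hab, show i₀ = b from max_eq_right hab]
      · rw [show m₀ = b from min_eq_right hab, show i₀ = a from max_eq_left hab, add_comm]
    rw [hd]
    rw [Finset.sum_eq_single (m₀, i₀)]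
    · rw [if_pos (min_le_max), if_pos rfl, mul_one]
    · rintro ⟨m, i⟩ - hne
      by_cases hmi : m ≤ i
      · rw [if_pos hmi]
        by_cases heq : Finsupp.single m 1 + Finsupp.single i 1
            = Finsupp.single m₀ 1 + Finsupp.single i₀ 1
        · exfalso
          rcases pair_finsupp_eq' heq with ⟨h1, h3⟩ | ⟨h1, h3⟩
          · exact hne (by rw [Prod.mk.injEq]; exact ⟨h1, h3⟩)
          · have : m₀ = i₀ := le_antisymm min_le_max (h3 ▸ h1 ▸ hmi)
            exact hne (by rw [Prod.mk.injEq]; exact ⟨h1.trans this.symm, h3.trans this⟩)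
        · rw [if_neg heq, mul_zero]
      · rw [if_neg hmi, zero_mul]
    · intro h; exact absurd (Finset.mem_univ _) h
  · rw [hP.coeff_eq_zero h2]
    symm
    apply Finset.sum_eq_zero
    rintro ⟨m, i⟩ -
    by_cases hmi : m ≤ i
    · rw [if_pos hmi]
      have : Finsupp.single m 1 + Finsupp.single i 1 ≠ d := by
        intro h; exact h2 (h ▸ degree_pair m i)
      rw [if_neg this, mul_zero]
    · rw [if_neg hmi, zero_mul]


lemma coeff_trunc {K : Type*} [CommSemiring K] {n : ℕ} (P : MvPolynomial (Fin (n+1)) K) (d : Fin n →₀ ℕ) :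
    coeff d (aeval (fun i : Fin (n + 1) =>
        if h : i.1 < n then (X ⟨i.1, h⟩ : MvPolynomial (Fin n) K) else 0) P)
      = coeff (d.mapDomain Fin.castSucc) P := by
  set f : Fin (n+1) → MvPolynomial (Fin n) K :=
    fun i => if h : i.1 < n then (X ⟨i.1, h⟩ : MvPolynomial (Fin n) K) else 0 with hf
  induction P using MvPolynomial.induction_on' with
  | add p q hp hq => rw [map_add, coeff_add, hp, hq, coeff_add]
  | monomial u c =>
    by_cases hu : u (Fin.last n) = 0
    · have hsupp : ↑u.support ⊆ Set.range (Fin.castSucc : Fin n → Fin (n+1)) := by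
        intro i hi
        rcases Fin.eq_castSucc_or_eq_last i with ⟨j, rfl⟩ | rfl
        · exact ⟨j, rfl⟩
        · simp only [Finset.mem_coe, Finsupp.mem_support_iff] at hi; exact absurd hu hi
      set u' := Finsupp.comapDomain Fin.castSucc u (Fin.castSucc_injective n).injOn with hu'def
      have hu' : Finsupp.mapDomain Fin.castSucc u' = u :=
        Finsupp.mapDomain_comapDomain (f := Fin.castSucc) (Fin.castSucc_injective n) u hsupp
      have hcomp : f ∘ Fin.castSucc = fun j : Fin n => (X j : MvPolynomial (Fin n) K) := by
        funext j
        simp [hf, Fin.castSucc, Fin.is_lt]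
      rw [← hu', ← rename_monomial, aeval_rename, hcomp, aeval_X_left_apply,
        rename_monomial, coeff_monomial, coeff_monomial]
      simp only [(Finsupp.mapDomain_injective (Fin.castSucc_injective n)).eq_iff]
    · rw [aeval_monomial]
      have h1 : u.prod (fun i k => f i ^ k) = 0 := by
        apply Finset.prod_eq_zero (i := Fin.last n) (Finsupp.mem_support_iff.2 hu)
        simp only [hf]
        simp [zero_pow hu]
      have h2 : Finsupp.mapDomain Fin.castSucc d ≠ u := by
        intro h
        apply hu
        rw [← h]
        exact Finsupp.mapDomain_notin_range d _ (by
          rintro ⟨j, hj⟩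
          exact absurd (congrArg Fin.val hj) (by simp [Fin.castSucc]; omega))
      rw [h1, mul_zero, coeff_zero, coeff_monomial, if_neg (Ne.symm h2)]

lemma coeff_stable {K : Type*} [CommSemiring K] (p : ∀ n : ℕ, MvPolynomial (Fin n) K)
    (hcomp : ∀ n, aeval (fun i : Fin (n + 1) =>
        if h : i.1 < n then (X ⟨i.1, h⟩ : MvPolynomial (Fin n) K) else 0) (p (n + 1)) = p n)
    (m j : ℕ) {n n' : ℕ} (hle : n ≤ n') (hm : m < n) (hj : j < n) (hm' : m < n') (hj' : j < n') :
    coeff (Finsupp.single ⟨m, hm⟩ 1 + Finsupp.single ⟨j, hj⟩ 1) (p n)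
      = coeff (Finsupp.single ⟨m, hm'⟩ 1 + Finsupp.single ⟨j, hj'⟩ 1) (p n') := by
  have step : ∀ (k : ℕ) (hmk : m < k) (hjk : j < k),
      coeff (Finsupp.single ⟨m, hmk⟩ 1 + Finsupp.single ⟨j, hjk⟩ 1) (p k)
        = coeff (Finsupp.single (⟨m, Nat.lt_succ_of_lt hmk⟩ : Fin (k+1)) 1
            + Finsupp.single (⟨j, Nat.lt_succ_of_lt hjk⟩ : Fin (k+1)) 1) (p (k + 1)) := by
    intro k hmk hjk
    rw [← hcomp k, coeff_trunc]
    congr 1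
    rw [Finsupp.mapDomain_add, Finsupp.mapDomain_single, Finsupp.mapDomain_single]
    rfl
  induction n', hle using Nat.le_induction with
  | base => rfl
  | succ n'' hle ih =>
    rw [ih (lt_of_lt_of_le hm hle) (lt_of_lt_of_le hj hle),
      step n'' (lt_of_lt_of_le hm hle) (lt_of_lt_of_le hj hle)]

lemma sum_range_two_mul {M : Type*} [AddCommMonoid M] (n : ℕ) (F : ℕ → M) :
    ∑ k ∈ Finset.range (2 * n), F k = ∑ m ∈ Finset.range n, (F (2 * m) + F (2 * m + 1)) := by
  induction n with
  | zero => simp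
  | succ n ih =>
    rw [Finset.sum_range_succ, ← ih, show 2 * (n + 1) = (2 * n + 1) + 1 by ring,
      Finset.sum_range_succ, Finset.sum_range_succ, add_assoc]

/-- The infinite quadric `q = x₀x₁ + x₂x₃ + ⋯` specialises, via the row-finite substitution
monoid `E`, to every infinite quadric `p ∈ S²_∞`. -/
theorem stmt14 (K : Type*) [Field K] [Infinite K] (q : PSeq K 2)
    (hq : ∀ n, q.1 n = ∑ i : Fin n, ∑ j : Fin n,
        if i.1 % 2 = 0 ∧ j.1 = i.1 + 1 then X i * X j else 0) :
    ∀ p : PSeq K 2, SpecTo q p := by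
  intro p
  classical
  set A : ℕ → ℕ → K := fun m j =>
    if h : m ≤ j then
      coeff (Finsupp.single (⟨m, Nat.lt_succ_of_le h⟩ : Fin (j+1)) 1
        + Finsupp.single (⟨j, Nat.lt_succ_self j⟩ : Fin (j+1)) 1) (p.1 (j+1))
    else 0 with hA
  set e : ℕ → ℕ → K := fun i k =>
    if k % 2 = 0 then (if i = k / 2 then (1:K) else 0) else A (k / 2) i with he
  refine ⟨e, ?_, ?_⟩
  · -- row-finiteness
    intro i
    apply Set.Finite.subset (Finset.range (2*i+2)).finite_toSet
    intro k hk
    simp only [Function.mem_support] at hk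
    simp only [Finset.coe_range, Set.mem_Iio]
    by_contra hlt
    push_neg at hlt
    apply hk
    simp only [he]
    by_cases hpar : k % 2 = 0
    · rw [if_pos hpar, if_neg (by omega)]
    · rw [if_neg hpar, hA]
      exact dif_neg (by omega)
  · intro n
    refine ⟨2*n, ?_, ?_⟩
    · intro i j hi hj
      simp only [he]
      by_cases hpar : j % 2 = 0
      · rw [if_pos hpar, if_neg (by omega)]
      · rw [if_neg hpar, hA]
        exact dif_neg (by omega)
    · -- main computation
      set g : Fin (2*n) → MvPolynomial (Fin n) K :=
        fun j => ∑ i : Fin n, e i.1 j.1 • (X i : MvPolynomial (Fin n) K) with hg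
      show aeval g (q.1 (2*n)) = p.1 n
      set F : ℕ → MvPolynomial (Fin n) K := fun k =>
        if h : k + 1 < 2*n ∧ k % 2 = 0 then g ⟨k, by omega⟩ * g ⟨k+1, h.1⟩ else 0 with hF
      have h1 : ∀ i : Fin (2*n),
          (∑ j : Fin (2*n), if i.1 % 2 = 0 ∧ j.1 = i.1 + 1 then g i * g j else 0) = F i.1 := by
        intro i
        by_cases hp : i.1 % 2 = 0
        · have hi1 : i.1 + 1 < 2*n := by have := i.2; omega
          simp only [hF]
          rw [dif_pos ⟨hi1, hp⟩, Finset.sum_eq_single (⟨i.1+1, hi1⟩ : Fin (2*n))]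
          · rw [if_pos ⟨hp, rfl⟩]
          · rintro j _ hj
            rw [if_neg]
            rintro ⟨-, hj1⟩
            exact hj (Fin.ext hj1)
          · intro h; exact absurd (Finset.mem_univ _) h
        · simp only [hF]
          rw [dif_neg (fun h : _ ∧ _ => hp h.2)]
          apply Finset.sum_eq_zero
          intro j _
          rw [if_neg (fun h => hp h.1)]
      have hg_even : ∀ (m : Fin n) (h2m : 2*m.1 < 2*n), g ⟨2*m.1, h2m⟩ = X m := by
        intro m h2m
        simp only [hg]
        rw [Finset.sum_eq_single m]
        · have : e m.1 (2*m.1) = 1 := by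
            simp only [he]; rw [if_pos (by omega), if_pos (by omega)]
          rw [this, one_smul]
        · intro i _ hi
          have : e i.1 (2*m.1) = 0 := by
            simp only [he]
            rw [if_pos (by omega), if_neg (by
              intro h
              exact hi (Fin.ext (by omega)))]
          rw [this, zero_smul]
        · intro h; exact absurd (Finset.mem_univ _) h
      have hg_odd : ∀ (m : Fin n) (h2m : 2*m.1 + 1 < 2*n),
          g ⟨2*m.1 + 1, h2m⟩ = ∑ i : Fin n, A m.1 i.1 • (X i : MvPolynomial (Fin n) K) := by
        intro m h2m
        simp only [hg]
        apply Finset.sum_congr rfl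
        intro i _
        congr 1
        simp only [he]
        rw [if_neg (by omega)]
        congr 1
        omega
      have hstab : ∀ (m i : Fin n), A m.1 i.1
          = if m ≤ i then coeff (Finsupp.single m 1 + Finsupp.single i 1) (p.1 n) else 0 := by
        intro m i
        by_cases h : m.1 ≤ i.1
        · simp only [hA]
          rw [dif_pos h, if_pos (show m ≤ i from h)]
          exact coeff_stable p.1 p.2.2 m.1 i.1 (Nat.succ_le_of_lt i.2)
            (Nat.lt_succ_of_le h) (Nat.lt_succ_self i.1) m.2 i.2
        · simp only [hA]
          rw [dif_neg h, if_neg (show ¬ m ≤ i from h)]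
      calc aeval g (q.1 (2*n))
          = ∑ i : Fin (2*n), ∑ j : Fin (2*n),
              if i.1 % 2 = 0 ∧ j.1 = i.1 + 1 then g i * g j else 0 := by
            rw [hq (2*n), map_sum]
            apply Finset.sum_congr rfl
            intro i _
            rw [map_sum]
            apply Finset.sum_congr rfl
            intro j _
            rw [apply_ite (aeval g), map_mul, aeval_X, aeval_X, map_zero]
        _ = ∑ i : Fin (2*n), F i.1 := Finset.sum_congr rfl (fun i _ => h1 i)
        _ = ∑ k ∈ Finset.range (2*n), F k := Fin.sum_univ_eq_sum_range F (2*n)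
        _ = ∑ m ∈ Finset.range n, (F (2*m) + F (2*m+1)) := sum_range_two_mul n F
        _ = ∑ m ∈ Finset.range n, F (2*m) := by
            apply Finset.sum_congr rfl
            intro m _
            have hz : F (2*m+1) = 0 := by
              simp only [hF]; rw [dif_neg (by omega)]
            rw [hz, add_zero]
        _ = ∑ m : Fin n, F (2*m.1) := (Fin.sum_univ_eq_sum_range (fun k => F (2*k)) n).symm
        _ = ∑ m : Fin n, ∑ i : Fin n, A m.1 i.1 • (X m * X i) := by
            apply Finset.sum_congr rfl
            intro m _
            have hm2 : 2*m.1 + 1 < 2*n := by have := m.2; omega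
            simp only [hF]
            rw [dif_pos ⟨hm2, by omega⟩, hg_even m (by omega), hg_odd m hm2,
              Finset.mul_sum]
            apply Finset.sum_congr rfl
            intro i _
            rw [mul_smul_comm]
        _ = p.1 n := by
            rw [quad_decomp (p.1 n) (p.2.1 n)]
            apply Finset.sum_congr rfl
            intro m _
            apply Finset.sum_congr rfl
            intro i _
            rw [hstab m i]
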